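/- Border-case sufficiency: let x_f and x_r be trajectories with x_f(t_f) = 0, x_f(t_f + τ_f) = L, x_r(t_r) = 0, x_r(t_r + τ_r) = L, speeds in [vmin, vmax] (0 < vmin ≤ vmax), and t_f ≤ t_r. If for all t ∈ [t_r, t_f + τ_f] the lower border of f strictly exceeds the upper border of r, i.e., max(vmin·(t - t_f), L - vmax·(t_f + τ_f - t)) > min(vmax·(t - t_r), L - vmin·(t_r + τ_r - t)), then x_r(t) < x_f(t) for all t ∈ [t_r, t_f + τ_f] ∩ [t_r, t_r + τ_r]. -/
import Mathlib

lemma deriv_bounds_aux {f f' : ℝ → ℝ} {a b c C : ℝ}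
    (hf : ∀ t ∈ Set.Icc a b, HasDerivAt f (f' t) t)
    (hlo : ∀ t ∈ Set.Icc a b, c ≤ f' t)
    (hhi : ∀ t ∈ Set.Icc a b, f' t ≤ C)
    {x y : ℝ} (hx : x ∈ Set.Icc a b) (hy : y ∈ Set.Icc a b) (hxy : x ≤ y) :
    c * (y - x) ≤ f y - f x ∧ f y - f x ≤ C * (y - x) := by
  have hconv : Convex ℝ (Set.Icc a b) := convex_Icc a b
  have hcont : ContinuousOn f (Set.Icc a b) := fun t ht =>
    (hf t ht).continuousAt.continuousWithinAt
  have hdiff : DifferentiableOn ℝ f (interior (Set.Icc a b)) := fun t ht =>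
    ((hf t (interior_subset ht)).differentiableAt).differentiableWithinAt
  have hderiv : ∀ t ∈ interior (Set.Icc a b), deriv f t = f' t := fun t ht =>
    (hf t (interior_subset ht)).deriv
  constructor
  · exact hconv.mul_sub_le_image_sub_of_le_deriv hcont hdiff
      (fun t ht => (hderiv t ht) ▸ hlo t (interior_subset ht)) x hx y hy hxy
  · exact hconv.image_sub_le_mul_sub_of_deriv_le hcont hdiff
      (fun t ht => (hderiv t ht) ▸ hhi t (interior_subset ht)) x hx y hy hxy

theorem border_case_sufficiency
    (xf xr vfun wfun : ℝ → ℝ) (L vmin vmax tf tr τf τr : ℝ)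
    (hvmin : 0 < vmin) (hvv : vmin ≤ vmax) (htt : tf ≤ tr)
    (hτf : 0 < τf) (hτr : 0 < τr)
    (hLf : vmin * τf ≤ L ∧ L ≤ vmax * τf)
    (hLr : vmin * τr ≤ L ∧ L ≤ vmax * τr)
    (hxf : ∀ t ∈ Set.Icc tf (tf + τf), HasDerivAt xf (vfun t) t)
    (hxr : ∀ t ∈ Set.Icc tr (tr + τr), HasDerivAt xr (wfun t) t)
    (hvf : ∀ t ∈ Set.Icc tf (tf + τf), vmin ≤ vfun t ∧ vfun t ≤ vmax)
    (hvr : ∀ t ∈ Set.Icc tr (tr + τr), vmin ≤ wfun t ∧ wfun t ≤ vmax)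
    (hxf0 : xf tf = 0) (hxfL : xf (tf + τf) = L)
    (hxr0 : xr tr = 0) (hxrL : xr (tr + τr) = L)
    (hborder : ∀ t ∈ Set.Icc tr (tf + τf),
      max (vmin * (t - tf)) (L - vmax * (tf + τf - t)) >
        min (vmax * (t - tr)) (L - vmin * (tr + τr - t))) :
    ∀ t ∈ Set.Icc tr (tf + τf) ∩ Set.Icc tr (tr + τr), xr t < xf t := by
  rintro t ⟨⟨htr, htff⟩, _, htrr⟩
  have htf : tf ≤ t := le_trans htt htr
  have htIf : t ∈ Set.Icc tf (tf + τf) := ⟨htf, htff⟩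
  have htIr : t ∈ Set.Icc tr (tr + τr) := ⟨htr, htrr⟩
  have hfI : tf ∈ Set.Icc tf (tf + τf) := ⟨le_refl _, by linarith⟩
  have hfE : tf + τf ∈ Set.Icc tf (tf + τf) := ⟨by linarith, le_refl _⟩
  have hrI : tr ∈ Set.Icc tr (tr + τr) := ⟨le_refl _, by linarith⟩
  have hrE : tr + τr ∈ Set.Icc tr (tr + τr) := ⟨by linarith, le_refl _⟩
  have hf1 := (deriv_bounds_aux hxf (fun s hs => (hvf s hs).1)
    (fun s hs => (hvf s hs).2) hfI htIf htf).1
  have hf2 := (deriv_bounds_aux hxf (fun s hs => (hvf s hs).1)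
    (fun s hs => (hvf s hs).2) htIf hfE htff).2
  have hr1 := (deriv_bounds_aux hxr (fun s hs => (hvr s hs).1)
    (fun s hs => (hvr s hs).2) hrI htIr htr).2
  have hr2 := (deriv_bounds_aux hxr (fun s hs => (hvr s hs).1)
    (fun s hs => (hvr s hs).2) htIr hrE htrr).1
  rw [hxf0] at hf1
  rw [hxfL] at hf2
  rw [hxr0] at hr1
  rw [hxrL] at hr2
  have hb := hborder t ⟨htr, htff⟩
  have hmax : max (vmin * (t - tf)) (L - vmax * (tf + τf - t)) ≤ xf t := by
    apply max_le <;> linarith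
  have hmin : xr t ≤ min (vmax * (t - tr)) (L - vmin * (tr + τr - t)) := by
    apply le_min <;> linarith
  linarith
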